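/- Let V be a poset of dimension at most 2 with a unique maximal node m. Define 𝓗_V* to be the set of all minimal nodes of V together with all height-one nodes dominating at least two minimal nodes, with m removed; define Λ_V to consist of all height-one elements of 𝓗_V* together with all nodes v ∈ 𝓗_V* for which no height-one element of 𝓗_V* lies above v. If a and b are distinct elements of Λ_V, then the set of common upper bounds of a and b in V equals {m}. -/

import Mathlib

/-- In a poset `V` of dimension at most 2 with a unique maximal node `m`, any two distinct
elements of `Λ_V` have `{m}` as their set of common upper bounds. -/
theorem lambda_common_upper_bounds {V : Type*} [PartialOrder V] (m : V)
    (hdim : Order.krullDim V ≤ 2)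
    (hmax : IsMax m) (huniq : ∀ x : V, IsMax x → x = m)
    (H Λ : Set V)
    (hH : H = {v : V | v ≠ m ∧ (IsMin v ∨ (Order.height v = 1 ∧
      ∃ a b : V, IsMin a ∧ IsMin b ∧ a ≠ b ∧ a ≤ v ∧ b ≤ v))})
    (hΛ : Λ = {v ∈ H | Order.height v = 1 ∨ ∀ h ∈ H, Order.height h = 1 → ¬ v ≤ h})
    {a b : V} (ha : a ∈ Λ) (hb : b ∈ Λ) (hab : a ≠ b) :
    {t : V | a ≤ t ∧ b ≤ t} = {m} := by
  -- every height is at most 2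
  have hle2 : ∀ x : V, Order.height x ≤ 2 := by
    intro x
    have h := Order.height_le_krullDim x
    have h2 : (Order.height x : WithBot ℕ∞) ≤ ((2 : ℕ∞) : WithBot ℕ∞) := by
      refine h.trans (le_trans hdim ?_)
      norm_num
    exact_mod_cast h2
  have hfin : ∀ x : V, Order.height x < ⊤ := fun x =>
    lt_of_le_of_lt (hle2 x) (by exact_mod_cast ENat.coe_lt_top 2)
  -- strict monotonicity
  have hstep : ∀ {x y : V}, x < y → Order.height x + 1 ≤ Order.height y := by
    intro x y hxy
    have := Order.height_strictMono hxy (hfin x)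
    exact (ENat.add_one_le_iff (hfin x).ne).mpr this
  -- anything of height ≥ 2 equals m
  have htwo : ∀ t : V, 2 ≤ Order.height t → t = m := by
    intro t ht
    refine huniq t (fun s hts => ?_)
    by_contra hst
    have hlt : t < s := lt_of_le_not_ge hts hst
    have h3 : (3 : ℕ∞) ≤ Order.height s := by
      have := hstep hlt
      calc (3 : ℕ∞) = 2 + 1 := by norm_num
        _ ≤ Order.height t + 1 := by gcongr
        _ ≤ Order.height s := this
    have := (hle2 s).trans_lt' (lt_of_lt_of_le (by norm_num : (2:ℕ∞) < 3) h3)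
    exact absurd this (lt_irrefl _)
  -- m is the greatest element
  have hm : ∀ x : V, x ≤ m := by
    intro x
    by_cases hx : IsMax x
    · exact (huniq x hx).le
    · simp only [IsMax, not_forall] at hx
      obtain ⟨y, hxy, hyx⟩ := hx
      have hxy' : x < y := lt_of_le_not_ge hxy hyx
      by_cases hy : IsMax y
      · exact hxy.trans (huniq y hy).le
      · simp only [IsMax, not_forall] at hy
        obtain ⟨z, hyz, hzy⟩ := hy
        have hyz' : y < z := lt_of_le_not_ge hyz hzy
        have h2 : (2 : ℕ∞) ≤ Order.height z := by
          have h1 : (1 : ℕ∞) ≤ Order.height y := le_trans (by simp) (hstep hxy')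
          calc (2 : ℕ∞) = 1 + 1 := by norm_num
            _ ≤ Order.height y + 1 := by gcongr
            _ ≤ Order.height z := hstep hyz'
        exact hxy.trans (hyz.trans (htwo z h2).le)
  subst hH hΛ
  obtain ⟨⟨ham, haH⟩, haΛ⟩ := ha
  obtain ⟨⟨hbm, hbH⟩, hbΛ⟩ := hb
  ext t
  simp only [Set.mem_setOf_eq, Set.mem_singleton_iff]
  constructor
  · rintro ⟨hat, hbt⟩
    by_contra htm
    -- main case analysis
    rcases eq_or_lt_of_le hat with rfl | hat'
    · -- t = a, so b < a
      have hba : b < a := lt_of_le_of_ne hbt hab.symm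
      rcases haH with hamin | ⟨hah, hex⟩
      · exact absurd hba hamin.not_lt
      · -- b ≤ a, a ∈ H of height 1; b cannot have height 1
        have hb0 : Order.height b = 0 := by
          have := hstep hba
          rw [hah] at this
          by_contra h0
          have h1 : (1 : ℕ∞) ≤ Order.height b := ENat.one_le_iff_ne_zero.mpr h0
          have : (2 : ℕ∞) ≤ (1 : ℕ∞) := by
            calc (2 : ℕ∞) = 1 + 1 := by norm_num
              _ ≤ Order.height b + 1 := by gcongr
              _ ≤ 1 := this
          norm_num at this
        rcases hbΛ with hb1 | hbA
        · rw [hb0] at hb1; norm_num at hb1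
        · exact hbA a ⟨ham, Or.inr ⟨hah, hex⟩⟩ hah hbt
    · -- a < t
      rcases haH with hamin | ⟨hah, _⟩
      · -- a minimal; a's Λ condition must be the second one
        have ha0 : Order.height a = 0 := Order.height_eq_zero.mpr hamin
        have haA : ∀ h ∈ {v : V | v ≠ m ∧ (IsMin v ∨ (Order.height v = 1 ∧
            ∃ x y : V, IsMin x ∧ IsMin y ∧ x ≠ y ∧ x ≤ v ∧ y ≤ v))},
            Order.height h = 1 → ¬ a ≤ h := by
          rcases haΛ with h1 | h2
          · rw [ha0] at h1; norm_num at h1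
          · exact h2
        -- height t ≥ 1; if height t ≥ 2 then t = m, contradiction
        have ht1 : Order.height t ≠ 0 := by
          intro h0
          have := hstep hat'
          rw [h0] at this
          simp at this
        have htlt2 : Order.height t < 2 := by
          rcases lt_or_ge (Order.height t) 2 with h | h
          · exact h
          · exact absurd (htwo t h) htm
        have hth : Order.height t = 1 := by
          have h1 : (1 : ℕ∞) ≤ Order.height t := ENat.one_le_iff_ne_zero.mpr ht1
          have h2 : Order.height t ≤ 1 := by
            have := (ENat.lt_add_one_iff (by norm_num : (1:ℕ∞) ≠ ⊤)).mp
              (show Order.height t < 1 + 1 by rw [one_add_one_eq_two]; exact htlt2)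
            exact this
          exact le_antisymm h2 h1
        -- examine b
        rcases hbH with hbmin | ⟨hbh, hbex⟩
        · -- t ∈ H with height 1 dominating a ≠ b minimal, contradicting a's condition
          exact haA t ⟨htm, Or.inr ⟨hth, a, b, hamin, hbmin, hab, hat, hbt⟩⟩ hth hat
        · -- b has height 1
          rcases eq_or_lt_of_le hbt with rfl | hbt'
          · exact haA b ⟨hbm, Or.inr ⟨hbh, hbex⟩⟩ hbh hat
          · have := hstep hbt'
            rw [hbh] at this
            have : (2 : ℕ∞) ≤ Order.height t := by
              calc (2 : ℕ∞) = 1 + 1 := by norm_num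
                _ ≤ Order.height t := this
            exact htm (htwo t this)
      · -- a has height 1, so height t ≥ 2 and t = m
        have := hstep hat'
        rw [hah] at this
        have h2 : (2 : ℕ∞) ≤ Order.height t := by
          calc (2 : ℕ∞) = 1 + 1 := by norm_num
            _ ≤ Order.height t := this
        exact htm (htwo t h2)
  · rintro rfl
    exact ⟨hm a, hm b⟩
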